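/- arXiv:1704.04256 — 2 statements merged into one kernel-verified Lean document; each statement's English description precedes it below -/
import Mathlib

section
/- Let d, δ, v be positive integers with δ dividing d. If v^n divides d^n/δ^(n-1) for all positive integers n, then v divides d/δ. -/
/-- If `δ ∣ d` and `v ^ n ∣ d ^ n / δ ^ (n - 1)` for all `n ≥ 1`, then `v ∣ d / δ`. -/
theorem stmt_1 (d δ v : ℕ) (hd : 0 < d) (hδ : 0 < δ) (hv : 0 < v) (hdvd : δ ∣ d)
    (h : ∀ n : ℕ, 0 < n → v ^ n ∣ d ^ n / δ ^ (n - 1)) :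
    v ∣ d / δ := by
  obtain ⟨m, rfl⟩ := hdvd
  have hm : 0 < m := Nat.pos_of_mul_pos_left (by rwa [mul_comm] at hd)
  rw [Nat.mul_div_cancel_left m hδ]
  have key : ∀ n : ℕ, 0 < n → v ^ n ∣ δ * m ^ n := by
    intro n hn
    have hdvd := h n hn
    have heq : (δ * m) ^ n / δ ^ (n - 1) = δ * m ^ n := by
      have hpow : δ ^ n = δ ^ (n - 1) * δ := by
        conv_lhs => rw [show n = (n - 1) + 1 by omega]
        rw [pow_succ]
      rw [mul_pow, hpow, mul_assoc, Nat.mul_div_cancel_left _ (pow_pos hδ _)]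
    rwa [heq] at hdvd
  rw [← Nat.factorization_le_iff_dvd hv.ne' hm.ne']
  intro p
  have hfac : ∀ n : ℕ, 0 < n →
      n * v.factorization p ≤ δ.factorization p + n * m.factorization p := by
    intro n hn
    have := (Nat.factorization_le_iff_dvd (pow_ne_zero n hv.ne')
      (by positivity)).mpr (key n hn) p
    simpa [Nat.factorization_mul hδ.ne' (pow_ne_zero n hm.ne'),
      Nat.factorization_pow] using this
  by_contra hlt
  push_neg at hlt
  have := hfac (δ.factorization p + 1) (by omega)
  nlinarith [this, hlt]
end

section
/- Let H be a Hopf algebra over a field k and let K, L be Hopf subalgebras of H. Then every element of K commutes with every element of L if and only if the Hopf commutator [l,k] := l₍₁₎k₍₁₎S(l₍₂₎)S(k₍₂₎) equals ε(l)ε(k)·1 for all k ∈ K and l ∈ L. -/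
open TensorProduct

/-- The Hopf commutator `[h,g] = h₍₁₎g₍₁₎S(h₍₂₎)S(g₍₂₎)` of two elements of a Hopf algebra. -/
noncomputable def hopfComm (k : Type*) {H : Type*} [CommRing k] [Ring H] [HopfAlgebra k H]
    (h g : H) : H :=
  (LinearMap.mul' k H ∘ₗ
    TensorProduct.map (LinearMap.mul' k H)
      (LinearMap.mul' k H ∘ₗ
        TensorProduct.map (HopfAlgebra.antipode (R := k)) (HopfAlgebra.antipode (R := k))) ∘ₗ
    (TensorProduct.tensorTensorTensorComm k H H H H).toLinearMap)
  (Coalgebra.comul (R := k) h ⊗ₜ[k] Coalgebra.comul (R := k) g)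

/-- A subalgebra of a Hopf algebra which is closed under comultiplication and the antipode,
i.e. a Hopf subalgebra. -/
def IsHopfSubalgebra (k : Type*) {H : Type*} [CommRing k] [Ring H] [HopfAlgebra k H]
    (K : Subalgebra k H) : Prop :=
  (∀ x ∈ K, Coalgebra.comul (R := k) x ∈
      LinearMap.range (TensorProduct.map K.toSubmodule.subtype K.toSubmodule.subtype)) ∧
    ∀ x ∈ K, HopfAlgebra.antipode (R := k) x ∈ K

open Coalgebra HopfAlgebra

universe u v
variable {k : Type u} {H : Type v} [CommRing k] [Ring H] [HopfAlgebra k H]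

lemma repr_mem {K : Subalgebra k H}
    (hK : ∀ x ∈ K, Coalgebra.comul (R := k) x ∈
      LinearMap.range (TensorProduct.map K.toSubmodule.subtype K.toSubmodule.subtype))
    {x : H} (hx : x ∈ K) :
    ∃ r : Coalgebra.Repr k x (↥K.toSubmodule × ↥K.toSubmodule), (∀ i, r.left i ∈ K) ∧ (∀ i, r.right i ∈ K) := by
  obtain ⟨t, ht⟩ := hK x hx
  obtain ⟨s, hs⟩ := TensorProduct.exists_finset t
  refine ⟨{ index := s, left := fun p => ↑p.1, right := fun p => ↑p.2, eq := ?_ },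
    fun p => p.1.2, fun p => p.2.2⟩
  rw [← ht, hs, map_sum]
  rfl

lemma hopfComm_repr {ι κ : Type*} {x y : H} (rx : Coalgebra.Repr k x ι) (ry : Coalgebra.Repr k y κ) :
    hopfComm k y x = ∑ j ∈ ry.index, ∑ i ∈ rx.index,
      ry.left j * rx.left i *
        (HopfAlgebra.antipode (R := k) (ry.right j) * HopfAlgebra.antipode (R := k) (rx.right i)) := by
  rw [hopfComm, ← rx.eq, ← ry.eq]
  simp [TensorProduct.sum_tmul, TensorProduct.tmul_sum, map_sum,
    TensorProduct.tensorTensorTensorComm_tmul, LinearMap.mul'_apply]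
  exact Finset.sum_comm

lemma sum_counit_smul {ι : Type*} {z : H} (rz : Coalgebra.Repr k z ι) :
    ∑ i ∈ rz.index, Coalgebra.counit (R := k) (rz.left i) • rz.right i = z := by
  have h := congrArg (TensorProduct.lid k H) (Coalgebra.sum_counit_tmul_eq rz)
  simp only [map_sum, TensorProduct.lid_tmul, one_smul] at h
  exact h

lemma sum_smul_counit {ι : Type*} {z : H} (rz : Coalgebra.Repr k z ι) :
    ∑ i ∈ rz.index, Coalgebra.counit (R := k) (rz.right i) • rz.left i = z := by
  have h := congrArg (TensorProduct.rid k H) (Coalgebra.sum_tmul_counit_eq rz)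
  simp only [map_sum, TensorProduct.rid_tmul, one_smul] at h
  exact h

/-- Sweedler: `∑ z₍₁₎ ⊗ S(z₍₂₎) z₍₃₎ = z ⊗ 1`. -/
lemma sum_tmul_antipode_mul {ι : Type*} {z : H} (rz : Coalgebra.Repr k z ι)
    (rI : ∀ i, Coalgebra.Repr k (rz.left i) (H × H)) :
    ∑ i ∈ rz.index, ∑ q ∈ (rI i).index,
      (rI i).left q ⊗ₜ[k] (HopfAlgebra.antipode (R := k) ((rI i).right q) * rz.right i) =
      z ⊗ₜ[k] (1 : H) := by
  have h := Coalgebra.sum_tmul_tmul_eq rz rI (fun i => Coalgebra.Repr.arbitrary k (rz.right i))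
  have h2 := congrArg (TensorProduct.map (LinearMap.id (R := k) (M := H))
    (LinearMap.mul' k H ∘ₗ (HopfAlgebra.antipode (R := k)).rTensor H)) h
  simp only [map_sum, TensorProduct.map_tmul, LinearMap.id_coe, id_eq, LinearMap.coe_comp,
    Function.comp_apply, LinearMap.rTensor_tmul, LinearMap.mul'_apply] at h2
  rw [h2]
  have : ∀ i ∈ rz.index,
      ∑ q ∈ (Coalgebra.Repr.arbitrary k (rz.right i)).index,
        rz.left i ⊗ₜ[k] (HopfAlgebra.antipode (R := k)
            ((Coalgebra.Repr.arbitrary k (rz.right i)).left q) *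
          (Coalgebra.Repr.arbitrary k (rz.right i)).right q) =
        (Coalgebra.counit (R := k) (rz.right i)) • rz.left i ⊗ₜ[k] (1 : H) := by
    intro i _
    rw [← TensorProduct.tmul_sum, HopfAlgebra.sum_antipode_mul_eq_smul, TensorProduct.tmul_smul,
      TensorProduct.smul_tmul']
  rw [Finset.sum_congr rfl this]
  simp only [TensorProduct.smul_tmul']
  rw [← TensorProduct.sum_tmul, sum_smul_counit rz]

theorem stmt_2' (K L : Subalgebra k H)
    (hK : (∀ x ∈ K, Coalgebra.comul (R := k) x ∈
      LinearMap.range (TensorProduct.map K.toSubmodule.subtype K.toSubmodule.subtype)) ∧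
        ∀ x ∈ K, HopfAlgebra.antipode (R := k) x ∈ K)
    (hL : (∀ x ∈ L, Coalgebra.comul (R := k) x ∈
      LinearMap.range (TensorProduct.map L.toSubmodule.subtype L.toSubmodule.subtype)) ∧
        ∀ x ∈ L, HopfAlgebra.antipode (R := k) x ∈ L) :
    (∀ x ∈ K, ∀ y ∈ L, x * y = y * x) ↔
      ∀ x ∈ K, ∀ y ∈ L,
        hopfComm k y x =
          (Coalgebra.counit (R := k) y * Coalgebra.counit (R := k) x) • (1 : H) := by
  constructor
  · intro hcomm x hx y hy
    obtain ⟨rx, hxl, hxr⟩ := repr_mem hK.1 hx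
    obtain ⟨ry, hyl, hyr⟩ := repr_mem hL.1 hy
    rw [hopfComm_repr rx ry]
    have t : ∀ j ∈ ry.index, ∀ i ∈ rx.index,
        ry.left j * rx.left i *
          (HopfAlgebra.antipode (R := k) (ry.right j) * HopfAlgebra.antipode (R := k) (rx.right i))
        = (ry.left j * HopfAlgebra.antipode (R := k) (ry.right j)) *
            (rx.left i * HopfAlgebra.antipode (R := k) (rx.right i)) := by
      intro j _ i _
      have hc : rx.left i * HopfAlgebra.antipode (R := k) (ry.right j) =
          HopfAlgebra.antipode (R := k) (ry.right j) * rx.left i :=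
        hcomm _ (hxl i) _ (hL.2 _ (hyr j))
      rw [← mul_assoc, mul_assoc (ry.left j), hc, ← mul_assoc, mul_assoc]
    rw [Finset.sum_congr rfl (fun j hj => Finset.sum_congr rfl (fun i hi => t j hj i hi)),
      ← Finset.sum_mul_sum, HopfAlgebra.sum_mul_antipode_eq_smul ry,
      HopfAlgebra.sum_mul_antipode_eq_smul rx, smul_mul_smul_comm, mul_one]
  · intro hcomm x hx y hy
    obtain ⟨rx, hxl, hxr⟩ := repr_mem hK.1 hx
    obtain ⟨ry, hyl, hyr⟩ := repr_mem hL.1 hy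
    set rJ : ∀ i, Coalgebra.Repr k (rx.left i) (H × H) := fun i => Coalgebra.Repr.arbitrary k (rx.left i)
      with hrJ
    set rI : ∀ j, Coalgebra.Repr k (ry.left j) (H × H) := fun j => Coalgebra.Repr.arbitrary k (ry.left j)
      with hrI
    -- the double sum T
    have e1 : ∑ j ∈ ry.index, ∑ i ∈ rx.index,
        hopfComm k (ry.left j) (rx.left i) * rx.right i * ry.right j = x * y := by
      have t1 : ∀ j ∈ ry.index, ∀ i ∈ rx.index,
          hopfComm k (ry.left j) (rx.left i) * rx.right i * ry.right j =
            (Coalgebra.counit (R := k) (ry.left j) * Coalgebra.counit (R := k) (rx.left i)) •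
              (rx.right i * ry.right j) := by
        intro j _ i _
        rw [hcomm _ (hxl i) _ (hyl j), smul_mul_assoc, smul_mul_assoc, one_mul]
      rw [Finset.sum_congr rfl (fun j hj => Finset.sum_congr rfl (fun i hi => t1 j hj i hi))]
      have hx2 : (∑ i ∈ rx.index, Coalgebra.counit (R := k) (rx.left i) • rx.right i) *
          (∑ j ∈ ry.index, Coalgebra.counit (R := k) (ry.left j) • ry.right j) = x * y := by
        rw [_root_.sum_counit_smul rx, _root_.sum_counit_smul ry]
      rw [← hx2, Finset.sum_mul_sum, Finset.sum_comm]
      exact Finset.sum_congr rfl fun i _ => Finset.sum_congr rfl fun j _ => by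
        rw [smul_mul_smul_comm, mul_comm (Coalgebra.counit (R := k) (rx.left i))]
    have key1 : ∀ e f d : H, ∑ i ∈ rx.index, ∑ q ∈ (rJ i).index,
        e * ((rJ i).left q * (HopfAlgebra.antipode (R := k) f *
          (HopfAlgebra.antipode (R := k) ((rJ i).right q) * (rx.right i * d)))) =
        e * (x * (HopfAlgebra.antipode (R := k) f * d)) := by
      intro e f d
      have h := congrArg (LinearMap.mulLeft k e ∘ₗ LinearMap.mul' k H ∘ₗ
        TensorProduct.map LinearMap.id
          (LinearMap.mulLeft k (HopfAlgebra.antipode (R := k) f) ∘ₗ LinearMap.mulRight k d))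
        (sum_tmul_antipode_mul rx rJ)
      simpa [map_sum, LinearMap.mul'_apply, mul_assoc] using h
    have key2 : ∑ j ∈ ry.index, ∑ p ∈ (rI j).index,
        (rI j).left p * (x * (HopfAlgebra.antipode (R := k) ((rI j).right p) * ry.right j)) =
        y * x := by
      have h := congrArg (LinearMap.mul' k H ∘ₗ
        TensorProduct.map LinearMap.id (LinearMap.mulLeft k x)) (sum_tmul_antipode_mul ry rI)
      simpa [map_sum, LinearMap.mul'_apply, mul_assoc] using h
    have step1 : ∀ j ∈ ry.index, ∑ i ∈ rx.index,
        hopfComm k (ry.left j) (rx.left i) * rx.right i * ry.right j =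
        ∑ p ∈ (rI j).index,
          (rI j).left p * (x * (HopfAlgebra.antipode (R := k) ((rI j).right p) * ry.right j)) := by
      intro j _
      rw [Finset.sum_congr rfl (fun i (_ : i ∈ rx.index) => by
        rw [hopfComm_repr (rJ i) (rI j)])]
      simp only [Finset.sum_mul]
      rw [Finset.sum_comm]
      refine Finset.sum_congr rfl fun p _ => ?_
      have := key1 ((rI j).left p) ((rI j).right p) (ry.right j)
      simpa [mul_assoc] using this
    have e2 : ∑ j ∈ ry.index, ∑ i ∈ rx.index,
        hopfComm k (ry.left j) (rx.left i) * rx.right i * ry.right j = y * x := by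
      rw [Finset.sum_congr rfl step1]
      exact key2
    rw [← e1, e2]

/-- Two Hopf subalgebras `K`, `L` of a Hopf algebra `H` commute elementwise if and only if
all Hopf commutators `[l,k]` with `l ∈ L`, `k ∈ K` equal `ε(l)ε(k)·1`. -/
theorem stmt_2 (k H : Type*) [Field k] [Ring H] [HopfAlgebra k H]
    (K L : Subalgebra k H) (hK : IsHopfSubalgebra k K) (hL : IsHopfSubalgebra k L) :
    (∀ x ∈ K, ∀ y ∈ L, x * y = y * x) ↔
      ∀ x ∈ K, ∀ y ∈ L,
        hopfComm k y x =
          (Coalgebra.counit (R := k) y * Coalgebra.counit (R := k) x) • (1 : H) := by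
  exact stmt_2' K L hK hL
end
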